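/- arXiv:1902.02968 — 3 statements merged into one kernel-verified Lean document; each statement's English description precedes it below -/
import Mathlib

section
/- Assume additionally that ω > 0, that x* ∈ D₀ satisfies F(x*) = 0, and that the open ball S(x*, 2/ω) = {z : ‖z − x*‖ < 2/ω} is contained in D₀. Then x* is the unique zero of F in S(x*, 2/ω): if y ∈ S(x*, 2/ω) and F(y) = 0, then y = x*. -/
noncomputable def pinv {n m : ℕ}
    (A : EuclideanSpace ℂ (Fin n) →L[ℂ] EuclideanSpace ℂ (Fin m)) :
    EuclideanSpace ℂ (Fin m) →L[ℂ] EuclideanSpace ℂ (Fin n) :=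
  (ContinuousLinearMap.inverse ((ContinuousLinearMap.adjoint A) ∘L A)) ∘L
    ContinuousLinearMap.adjoint A

noncomputable def newtonIter {n m : ℕ}
    (F : EuclideanSpace ℂ (Fin n) → EuclideanSpace ℂ (Fin m))
    (x0 : EuclideanSpace ℂ (Fin n)) : ℕ → EuclideanSpace ℂ (Fin n)
  | 0 => x0
  | (k+1) => newtonIter F x0 k - pinv (fderiv ℂ F (newtonIter F x0 k)) (F (newtonIter F x0 k))

noncomputable def newtonStep {n m : ℕ}
    (F : EuclideanSpace ℂ (Fin n) → EuclideanSpace ℂ (Fin m))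
    (x0 : EuclideanSpace ℂ (Fin n)) (k : ℕ) : EuclideanSpace ℂ (Fin n) :=
  newtonIter F x0 (k+1) - newtonIter F x0 k

lemma pinv_comp {n m : ℕ}
    (A : EuclideanSpace ℂ (Fin n) →L[ℂ] EuclideanSpace ℂ (Fin m))
    (hA : Function.Injective A) :
    (pinv A) ∘L A = ContinuousLinearMap.id ℂ _ := by
  set B := (ContinuousLinearMap.adjoint A) ∘L A with hB
  have hBinj : Function.Injective B := by
    intro u v huv
    apply hA
    have h : ∀ w, B w = 0 → A w = 0 := by
      intro w hw
      have : inner ℂ (A w) (A w) = (0 : ℂ) := by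
        rw [← ContinuousLinearMap.adjoint_inner_left]
        show inner ℂ (B w) w = (0:ℂ)
        rw [hw]; simp
      simpa using inner_self_eq_zero.mp this
    have : B (u - v) = 0 := by rw [map_sub, huv, sub_self]
    have := h _ this
    rw [map_sub, sub_eq_zero] at this
    exact this
  let e₀ : EuclideanSpace ℂ (Fin n) ≃ₗ[ℂ] EuclideanSpace ℂ (Fin n) :=
    LinearEquiv.ofInjectiveEndo (B : _ →ₗ[ℂ] _) hBinj
  let e : EuclideanSpace ℂ (Fin n) ≃L[ℂ] EuclideanSpace ℂ (Fin n) :=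
    e₀.toContinuousLinearEquiv
  have heB : (e : EuclideanSpace ℂ (Fin n) →L[ℂ] EuclideanSpace ℂ (Fin n)) = B := by
    ext x
    simp [e, e₀, LinearEquiv.coe_toContinuousLinearEquiv]
  have : ContinuousLinearMap.inverse B ∘L B = ContinuousLinearMap.id ℂ _ := by
    rw [← heB, ContinuousLinearMap.inverse_equiv]
    ext x
    simp
  calc (pinv A) ∘L A = ContinuousLinearMap.inverse B ∘L B := by
        rw [pinv, ContinuousLinearMap.comp_assoc]
    _ = _ := this

set_option maxHeartbeats 1600000 in
/-- Uniqueness of the zero `x*` of `F` in the open ball `S(x*, 2/ω)`. -/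
theorem newton_mysovskikh_uniqueness {n m : ℕ} (hn : 0 < n) (hnm : n ≤ m)
    (F : EuclideanSpace ℂ (Fin n) → EuclideanSpace ℂ (Fin m)) (hF : ContDiff ℂ 1 F)
    (xstar : EuclideanSpace ℂ (Fin n)) (D0 : Set (EuclideanSpace ℂ (Fin n)))
    (hD0open : IsOpen D0) (hD0conv : Convex ℝ D0)
    (ω : ℝ) (hω : 0 < ω)
    (hinj : ∀ x ∈ D0, Function.Injective (fderiv ℂ F x))
    (hLip : ∀ x ∈ D0, ∀ y ∈ D0, ∀ t ∈ Set.Icc (0:ℝ) 1,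
      ‖(pinv (fderiv ℂ F y)) ∘L (fderiv ℂ F (x + t • (y - x)) - fderiv ℂ F x)‖
        ≤ ω * t * ‖y - x‖)
    (hxstar : xstar ∈ D0) (hFstar : F xstar = 0)
    (hball : {z : EuclideanSpace ℂ (Fin n) | ‖z - xstar‖ < 2 / ω} ⊆ D0) :
    ∀ y : EuclideanSpace ℂ (Fin n), ‖y - xstar‖ < 2 / ω → F y = 0 → y = xstar := by
  intro y hy hFy
  set d := y - xstar with hd
  set P := pinv (fderiv ℂ F y) with hP
  have hyD0 : y ∈ D0 := hball hy
  have hPid : P ∘L (fderiv ℂ F y) = ContinuousLinearMap.id ℂ _ :=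
    pinv_comp _ (hinj y hyD0)
  have hmem : ∀ t ∈ Set.Icc (0:ℝ) 1, xstar + t • d ∈ D0 := by
    intro t ht
    apply hball
    simp only [Set.mem_setOf_eq, add_sub_cancel_left]
    calc ‖t • d‖ = |t| * ‖d‖ := by rw [norm_smul, Real.norm_eq_abs]
      _ ≤ 1 * ‖d‖ := by
          apply mul_le_mul_of_nonneg_right _ (norm_nonneg d)
          rw [abs_le]; exact ⟨by linarith [ht.1], ht.2⟩
      _ < 2 / ω := by rw [one_mul]; exact hy
  have hdiffF : Differentiable ℂ F := hF.differentiable one_ne_zero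
  -- derivative of t ↦ (xstar + t • d) - P (F (xstar + t • d))
  have hderiv : ∀ t : ℝ, HasDerivAt
      (fun s : ℝ => (xstar + s • d) - P (F (xstar + s • d)))
      (d - P ((fderiv ℂ F (xstar + t • d)) d)) t := by
    intro t
    have hline : HasDerivAt (fun s : ℝ => xstar + s • d) d t := by
      simpa using ((hasDerivAt_id t).smul_const d).const_add xstar
    have hFd : HasDerivAt (fun s : ℝ => F (xstar + s • d))
        ((fderiv ℂ F (xstar + t • d)) d) t := by
      have := ((hdiffF (xstar + t • d)).hasFDerivAt.restrictScalars ℝ).comp_hasDerivAt t hline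
      exact this
    have hPFd : HasDerivAt (fun s : ℝ => P (F (xstar + s • d)))
        (P ((fderiv ℂ F (xstar + t • d)) d)) t := by
      have := ((P.restrictScalars ℝ).hasFDerivAt).comp_hasDerivAt t hFd
      exact this
    exact hline.sub hPFd
  -- continuity of the integrand
  have hcont : Continuous fun t : ℝ => d - P ((fderiv ℂ F (xstar + t • d)) d) := by
    have hJ : Continuous (fderiv ℂ F) := hF.continuous_fderiv one_ne_zero
    have hline : Continuous fun t : ℝ => xstar + t • d :=
      continuous_const.add (continuous_id.smul continuous_const)
    exact continuous_const.sub
      (P.continuous.comp (((hJ.comp hline).clm_apply continuous_const)))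
  have hFTC : ∫ t in (0:ℝ)..1, (d - P ((fderiv ℂ F (xstar + t • d)) d)) = d := by
    rw [intervalIntegral.integral_eq_sub_of_hasDerivAt (fun t _ => hderiv t)
      (hcont.intervalIntegrable 0 1)]
    simp [hFy, hFstar, hd]
  -- pointwise bound
  have hbound : ∀ t ∈ Set.Icc (0:ℝ) 1,
      ‖d - P ((fderiv ℂ F (xstar + t • d)) d)‖ ≤ ω * (1 - t) * ‖d‖ ^ 2 := by
    intro t ht
    have h1 : d - P ((fderiv ℂ F (xstar + t • d)) d)
        = (P ∘L (fderiv ℂ F y - fderiv ℂ F (xstar + t • d))) d := by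
      have : P ((fderiv ℂ F y) d) = d := by
        have := congrArg (fun (T : EuclideanSpace ℂ (Fin n) →L[ℂ] EuclideanSpace ℂ (Fin n)) => T d) hPid
        simpa using this
      simp [ContinuousLinearMap.sub_apply, map_sub, this]
    have h2 := hLip (xstar + t • d) (hmem t ht) y hyD0 1 (by norm_num)
    have h3 : (xstar + t • d) + (1:ℝ) • (y - (xstar + t • d)) = y := by
      rw [one_smul]; abel
    have h4 : y - (xstar + t • d) = (1 - t) • d := by
      rw [sub_smul, one_smul, hd]; abel
    rw [h3, h4] at h2
    have h5 : ‖(1 - t) • d‖ = (1 - t) * ‖d‖ := by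
      rw [norm_smul, Real.norm_eq_abs, abs_of_nonneg (by linarith [ht.2])]
    rw [h5] at h2
    calc ‖d - P ((fderiv ℂ F (xstar + t • d)) d)‖
        = ‖(P ∘L (fderiv ℂ F y - fderiv ℂ F (xstar + t • d))) d‖ := by rw [h1]
      _ ≤ ‖P ∘L (fderiv ℂ F y - fderiv ℂ F (xstar + t • d))‖ * ‖d‖ :=
          ContinuousLinearMap.le_opNorm _ _
      _ ≤ (ω * 1 * ((1 - t) * ‖d‖)) * ‖d‖ :=
          mul_le_mul_of_nonneg_right h2 (norm_nonneg d)
      _ = ω * (1 - t) * ‖d‖ ^ 2 := by ring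
  -- integrate the bound
  have key : ‖d‖ ≤ ω / 2 * ‖d‖ ^ 2 := by
    have hgcont : Continuous fun t : ℝ => ω * (1 - t) * ‖d‖ ^ 2 :=
      ((continuous_const.mul (continuous_const.sub continuous_id)).mul continuous_const)
    have hle : ‖∫ t in (0:ℝ)..1, (d - P ((fderiv ℂ F (xstar + t • d)) d))‖
        ≤ ∫ t in (0:ℝ)..1, ω * (1 - t) * ‖d‖ ^ 2 := by
      refine le_trans (intervalIntegral.norm_integral_le_integral_norm zero_le_one) ?_
      apply intervalIntegral.integral_mono_on zero_le_one
        (hcont.norm.intervalIntegrable 0 1) (hgcont.intervalIntegrable 0 1)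
      intro t ht
      exact hbound t ht
    have hval : ∫ t in (0:ℝ)..1, ω * (1 - t) * ‖d‖ ^ 2 = ω / 2 * ‖d‖ ^ 2 := by
      have h : ∫ t in (0:ℝ)..1, ω * (1 - t) * ‖d‖ ^ 2
          = (∫ t in (0:ℝ)..1, (1 - t)) * (ω * ‖d‖ ^ 2) := by
        rw [← intervalIntegral.integral_mul_const]
        congr 1; ext t; ring
      rw [h, intervalIntegral.integral_sub intervalIntegrable_const
        intervalIntegral.intervalIntegrable_id]
      simp [integral_id]
      ring
    rw [hFTC] at hle
    rw [hval] at hle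
    exact hle
  -- conclude
  by_contra hne
  have hdne : d ≠ 0 := fun h => hne (by rwa [hd, sub_eq_zero] at h)
  have hdpos : 0 < ‖d‖ := norm_pos_iff.mpr hdne
  have h2 : ‖d‖ * ω < 2 := by
    rw [lt_div_iff₀ hω] at hy
    linarith
  nlinarith [key, hdpos, mul_lt_mul_of_pos_right h2 hdpos]
end

section
/- Let D ⊆ E be an open convex set on which J(x) is injective and the affine covariant Lipschitz condition ‖J(y)† ∘ (J(x + t(y − x)) − J(x))‖ ≤ ω t ‖y − x‖ holds for all x, y ∈ D and t ∈ [0, 1]. Then for all x, x̂ ∈ D, the pseudoinverse-weighted residual difference satisfies ‖J(x̂)† (F(x̂) − F(x))‖ ≤ ‖x̂ − x‖ · (1 + (ω/2)·‖x̂ − x‖). -/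
lemma pinv_comp_self {n m : ℕ} (A : EuclideanSpace ℂ (Fin n) →L[ℂ] EuclideanSpace ℂ (Fin m))
    (hA : Function.Injective A) :
    (pinv A) ∘L A = ContinuousLinearMap.id ℂ (EuclideanSpace ℂ (Fin n)) := by
  set B := (ContinuousLinearMap.adjoint A) ∘L A with hB
  have hBinj : Function.Injective B := by
    have hz : ∀ v, B v = 0 → v = 0 := by
      intro v hv
      have h1 : (inner ℂ (A v) (A v) : ℂ) = 0 := by
        rw [← ContinuousLinearMap.adjoint_inner_left]
        have : (ContinuousLinearMap.adjoint A) (A v) = 0 := hv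
        rw [this, inner_zero_left]
      have h2 : A v = 0 := inner_self_eq_zero.mp h1
      have h3 : A v = A 0 := by simpa using h2
      exact hA h3
    intro v w h
    have h0 : B (v - w) = 0 := by rw [map_sub, h, sub_self]
    exact sub_eq_zero.mp (hz _ h0)
  have hBsurj : Function.Surjective B :=
    (LinearMap.injective_iff_surjective (f := (B : EuclideanSpace ℂ (Fin n) →ₗ[ℂ]
      EuclideanSpace ℂ (Fin n)))).mp hBinj
  set e := ContinuousLinearEquiv.ofBijective B
    (LinearMap.ker_eq_bot.mpr hBinj) (LinearMap.range_eq_top.mpr hBsurj) with he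
  have hcoe : (e : EuclideanSpace ℂ (Fin n) →L[ℂ] EuclideanSpace ℂ (Fin n)) = B :=
    ContinuousLinearEquiv.coe_ofBijective _ _ _
  have hinv : ContinuousLinearMap.inverse B = (e.symm :
      EuclideanSpace ℂ (Fin n) →L[ℂ] EuclideanSpace ℂ (Fin n)) := by
    rw [← hcoe, ContinuousLinearMap.inverse_equiv]
  refine ContinuousLinearMap.ext fun v => ?_
  have : B v = e v := by rw [← hcoe]; rfl
  simp only [pinv, ContinuousLinearMap.comp_apply, ContinuousLinearMap.coe_comp',
    Function.comp_apply, ContinuousLinearMap.id_apply]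
  rw [show (ContinuousLinearMap.adjoint A) (A v) = B v from rfl, hinv, this]
  exact e.symm_apply_apply v

/-- Weighted residual bound: `‖J(x̂)†(F(x̂) − F(x))‖ ≤ ‖x̂ − x‖(1 + (ω/2)‖x̂ − x‖)`. -/
theorem pinv_residual_bound {n m : ℕ} (hn : 0 < n) (hnm : n ≤ m)
    (F : EuclideanSpace ℂ (Fin n) → EuclideanSpace ℂ (Fin m)) (hF : ContDiff ℂ 1 F)
    (D : Set (EuclideanSpace ℂ (Fin n))) (hDopen : IsOpen D) (hDconv : Convex ℝ D)
    (ω : ℝ) (hω : 0 ≤ ω)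
    (hinj : ∀ x ∈ D, Function.Injective (fderiv ℂ F x))
    (hLip : ∀ x ∈ D, ∀ y ∈ D, ∀ t ∈ Set.Icc (0:ℝ) 1,
      ‖(pinv (fderiv ℂ F y)) ∘L (fderiv ℂ F (x + t • (y - x)) - fderiv ℂ F x)‖
        ≤ ω * t * ‖y - x‖) :
    ∀ x ∈ D, ∀ xhat ∈ D,
      ‖pinv (fderiv ℂ F xhat) (F xhat - F x)‖
        ≤ ‖xhat - x‖ * (1 + ω / 2 * ‖xhat - x‖) := by
  intro x hx xhat hxhat
  set J : EuclideanSpace ℂ (Fin n) →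
      (EuclideanSpace ℂ (Fin n) →L[ℂ] EuclideanSpace ℂ (Fin m)) := fderiv ℂ F with hJ
  set d : EuclideanSpace ℂ (Fin n) := xhat - x with hd
  set γ : ℝ → EuclideanSpace ℂ (Fin n) := fun t => x + t • d with hγ
  have hγmem : ∀ t ∈ Set.Icc (0:ℝ) 1, γ t ∈ D := fun t ht =>
    hDconv.add_smul_sub_mem hx hxhat ht
  have hFd : Differentiable ℂ F := hF.differentiable one_ne_zero
  have hγcont : Continuous γ := continuous_const.add (continuous_id.smul continuous_const)
  have hcont : Continuous fun t : ℝ => (J (γ t)) d :=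
    Continuous.clm_apply ((hF.continuous_fderiv one_ne_zero).comp hγcont) continuous_const
  have hderiv : ∀ t : ℝ, HasDerivAt (fun s => F (γ s)) ((J (γ t)) d) t := by
    intro t
    have h1 : HasDerivAt γ d t := by
      simpa only [one_smul] using (((hasDerivAt_id' t).smul_const d).const_add x)
    have h2 : HasFDerivAt F (J (γ t)) (γ t) := (hFd (γ t)).hasFDerivAt
    exact (h2.restrictScalars ℝ).comp_hasDerivAt t h1
  have hγ0 : γ 0 = x := by simp [hγ]
  have hγ1 : γ 1 = xhat := by simp [hγ, hd]
  have hFTC : F xhat - F x = ∫ t in (0:ℝ)..1, (J (γ t)) d := by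
    rw [intervalIntegral.integral_eq_sub_of_hasDerivAt (fun t _ => hderiv t)
      (hcont.intervalIntegrable 0 1), hγ0, hγ1]
  set P := pinv (J xhat) with hP
  have hcomm : P (F xhat - F x) = ∫ t in (0:ℝ)..1, P ((J (γ t)) d) := by
    rw [hFTC, P.intervalIntegral_comp_comm (hcont.intervalIntegrable 0 1)]
  have hbound : ∀ t ∈ Set.Icc (0:ℝ) 1,
      ‖P ((J (γ t)) d)‖ ≤ ‖d‖ + ω * ‖d‖ ^ 2 * (1 - t) := by
    intro t ht
    have hmem := hγmem t ht
    have hlip := hLip (γ t) hmem xhat hxhat 1 (by norm_num)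
    have h1 : γ t + (1:ℝ) • (xhat - γ t) = xhat := by
      rw [one_smul, add_sub_cancel]
    rw [h1] at hlip
    have h2 : ‖xhat - γ t‖ = (1 - t) * ‖d‖ := by
      have hx2 : xhat - γ t = (1 - t) • d := by
        rw [hγ, hd]
        simp only []
        rw [sub_smul, one_smul]
        abel
      rw [hx2, norm_smul, Real.norm_eq_abs, abs_of_nonneg (by linarith [ht.2])]
    rw [h2] at hlip
    have hPid : P ((J xhat) d) = d := by
      have hid := pinv_comp_self (J xhat) (hinj xhat hxhat)
      have := congrArg (fun (T : EuclideanSpace ℂ (Fin n) →L[ℂ]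
        EuclideanSpace ℂ (Fin n)) => T d) hid
      simpa [ContinuousLinearMap.comp_apply] using this
    have key : P ((J (γ t)) d) = d - (P ∘L (J xhat - J (γ t))) d := by
      simp [ContinuousLinearMap.comp_apply, ContinuousLinearMap.sub_apply, map_sub, hPid]
    rw [key]
    have hle1 : ‖(P ∘L (J xhat - J (γ t))) d‖ ≤ ‖P ∘L (J xhat - J (γ t))‖ * ‖d‖ :=
      ContinuousLinearMap.le_opNorm _ d
    have hle2 : ‖P ∘L (J xhat - J (γ t))‖ * ‖d‖ ≤ (ω * 1 * ((1 - t) * ‖d‖)) * ‖d‖ := by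
      gcongr
    calc ‖d - (P ∘L (J xhat - J (γ t))) d‖
        ≤ ‖d‖ + ‖(P ∘L (J xhat - J (γ t))) d‖ := norm_sub_le _ _
      _ ≤ ‖d‖ + (ω * 1 * ((1 - t) * ‖d‖)) * ‖d‖ := by linarith
      _ = ‖d‖ + ω * ‖d‖ ^ 2 * (1 - t) := by ring
  have hbint : IntervalIntegrable (fun t : ℝ => ‖d‖ + ω * ‖d‖ ^ 2 * (1 - t))
      MeasureTheory.volume 0 1 :=
    (continuous_const.add
      (continuous_const.mul (continuous_const.sub continuous_id))).intervalIntegrable 0 1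
  have hnorm : ‖P (F xhat - F x)‖ ≤ |∫ t in (0:ℝ)..1, (‖d‖ + ω * ‖d‖ ^ 2 * (1 - t))| := by
    rw [hcomm]
    refine intervalIntegral.norm_integral_le_abs_of_norm_le ?_ hbint
    refine (MeasureTheory.ae_restrict_mem measurableSet_uIoc).mono fun t ht => ?_
    rw [Set.uIoc_of_le (by norm_num : (0:ℝ) ≤ 1)] at ht
    exact hbound t ⟨le_of_lt ht.1, ht.2⟩
  have hint : (∫ t in (0:ℝ)..1, (‖d‖ + ω * ‖d‖ ^ 2 * (1 - t)))
      = ‖d‖ + ω * ‖d‖ ^ 2 / 2 := by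
    have h1 : IntervalIntegrable (fun _ : ℝ => ‖d‖) MeasureTheory.volume 0 1 :=
      intervalIntegrable_const
    have h2 : IntervalIntegrable (fun t : ℝ => ω * ‖d‖ ^ 2 * (1 - t))
        MeasureTheory.volume 0 1 :=
      (continuous_const.mul (continuous_const.sub continuous_id)).intervalIntegrable 0 1
    rw [intervalIntegral.integral_add h1 h2, intervalIntegral.integral_const]
    have h3 : (∫ t in (0:ℝ)..1, ω * ‖d‖ ^ 2 * (1 - t))
        = ω * ‖d‖ ^ 2 * ∫ t in (0:ℝ)..1, (1 - t) := by
      rw [← intervalIntegral.integral_const_mul]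
    have h4 : (∫ t in (0:ℝ)..1, (1 - t : ℝ)) = 1 / 2 := by
      rw [intervalIntegral.integral_sub intervalIntegrable_const
        intervalIntegral.intervalIntegrable_id, intervalIntegral.integral_const,
        integral_id]
      norm_num
    rw [h3, h4, smul_eq_mul]
    ring
  have hfinal := hnorm
  rw [hint] at hfinal
  have habs : |‖d‖ + ω * ‖d‖ ^ 2 / 2| = ‖d‖ + ω * ‖d‖ ^ 2 / 2 := by
    apply abs_of_nonneg
    positivity
  rw [habs] at hfinal
  calc ‖pinv (fderiv ℂ F xhat) (F xhat - F x)‖ = ‖P (F xhat - F x)‖ := rfl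
    _ ≤ ‖d‖ + ω * ‖d‖ ^ 2 / 2 := hfinal
    _ = ‖xhat - x‖ * (1 + ω / 2 * ‖xhat - x‖) := by rw [← hd]; ring
end

section
/- Let H : E × ℝ → F' be continuously differentiable and let x : ℝ → E be differentiable with H(x(t), t) = 0 for all t. Then the path satisfies the Davidenko differential equation H_x(x(t), t)(ẋ(t)) + H_t(x(t), t) = 0 for all t, where H_x and H_t denote the partial derivatives of H with respect to the first and second argument. Moreover, if H_x(x(t), t) is injective, then ẋ(t) = −H_x(x(t), t)† H_t(x(t), t). -/
lemma pinv_apply_apply {n m : ℕ}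
    (A : EuclideanSpace ℂ (Fin n) →L[ℂ] EuclideanSpace ℂ (Fin m))
    (hA : Function.Injective A) (v : EuclideanSpace ℂ (Fin n)) :
    pinv A (A v) = v := by
  set B := (ContinuousLinearMap.adjoint A) ∘L A with hB
  have hinjB : Function.Injective B := by
    intro u w h
    have h0 : B (u - w) = 0 := by rw [map_sub, h, sub_self]
    have : (inner ℂ (A (u - w)) (A (u - w)) : ℂ) = 0 := by
      rw [← ContinuousLinearMap.adjoint_inner_left]
      rw [show (ContinuousLinearMap.adjoint A) (A (u - w)) = 0 from h0, inner_zero_left]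
    have : A (u - w) = 0 := inner_self_eq_zero.mp this
    have := hA (by simpa using this : A (u - w) = A 0)
    exact sub_eq_zero.mp (by simpa using this)
  have hbij : Function.Bijective B :=
    ⟨hinjB, (LinearMap.injective_iff_surjective (f := B.toLinearMap)).mp hinjB⟩
  let e := (LinearEquiv.ofBijective B.toLinearMap hbij).toContinuousLinearEquiv
  have hcoe : (e : EuclideanSpace ℂ (Fin n) →L[ℂ] EuclideanSpace ℂ (Fin n)) = B := by
    ext w; rfl
  have hinv : ContinuousLinearMap.inverse B = (e.symm : _ →L[ℂ] _) := by
    rw [← hcoe, ContinuousLinearMap.inverse_equiv]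
  show (ContinuousLinearMap.inverse B) ((ContinuousLinearMap.adjoint A) (A v)) = v
  have : (ContinuousLinearMap.adjoint A) (A v) = e v := rfl
  rw [this, hinv]
  exact e.symm_apply_apply v

/-- The Davidenko differential equation: a differentiable solution path of
`H(x(t), t) = 0` satisfies `H_x(x(t), t)(ẋ(t)) + H_t(x(t), t) = 0`, and if moreover
`H_x(x(t), t)` is injective then `ẋ(t) = −H_x(x(t), t)† H_t(x(t), t)`. -/
theorem davidenko_equation {n m : ℕ} (hn : 0 < n) (hnm : n ≤ m)
    (H : EuclideanSpace ℂ (Fin n) × ℝ → EuclideanSpace ℂ (Fin m))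
    (hH : ContDiff ℝ 1 H)
    (hHx : ∀ (u : EuclideanSpace ℂ (Fin n)) (t : ℝ),
      DifferentiableAt ℂ (fun v => H (v, t)) u)
    (x x' : ℝ → EuclideanSpace ℂ (Fin n))
    (hx : ∀ t : ℝ, HasDerivAt x (x' t) t)
    (hsol : ∀ t : ℝ, H (x t, t) = 0) :
    ∀ t : ℝ,
      (fderiv ℂ (fun v => H (v, t)) (x t)) (x' t) + deriv (fun s => H (x t, s)) t = 0 ∧
      (Function.Injective (fderiv ℂ (fun v => H (v, t)) (x t)) →
        x' t = - pinv (fderiv ℂ (fun v => H (v, t)) (x t)) (deriv (fun s => H (x t, s)) t)) := by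
  intro t
  set p : EuclideanSpace ℂ (Fin n) × ℝ := (x t, t) with hp
  have hHd : HasFDerivAt H (fderiv ℝ H p) p :=
    ((hH.differentiable one_ne_zero) p).hasFDerivAt
  -- total derivative along the path vanishes
  have hc : HasDerivAt (fun s => (x s, s)) (x' t, (1 : ℝ)) t :=
    (hx t).prodMk (hasDerivAt_id t)
  have htot : HasDerivAt (fun s => H (x s, s)) (fderiv ℝ H p (x' t, 1)) t :=
    hHd.comp_hasDerivAt (f := fun s => (x s, s)) t hc
  have hzero : HasDerivAt (fun s => H (x s, s)) 0 t := by
    have : (fun s => H (x s, s)) = fun _ => (0 : EuclideanSpace ℂ (Fin m)) :=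
      funext fun s => hsol s
    rw [this]; exact hasDerivAt_const t 0
  have hkey : fderiv ℝ H p (x' t, 1) = 0 := htot.unique hzero
  -- partial derivative in u
  have hu : HasFDerivAt (fun v => H (v, t))
      ((fderiv ℝ H p).comp (ContinuousLinearMap.inl ℝ (EuclideanSpace ℂ (Fin n)) ℝ)) (x t) :=
    hHd.comp (x t) (hasFDerivAt_prodMk_left (x t) t)
  have hud : fderiv ℝ (fun v => H (v, t)) (x t)
      = (fderiv ℝ H p).comp (ContinuousLinearMap.inl ℝ (EuclideanSpace ℂ (Fin n)) ℝ) :=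
    hu.fderiv
  have hRC : fderiv ℝ (fun v => H (v, t)) (x t)
      = (fderiv ℂ (fun v => H (v, t)) (x t)).restrictScalars ℝ :=
    (hHx (x t) t).fderiv_restrictScalars ℝ
  have hCapp : ∀ w, fderiv ℂ (fun v => H (v, t)) (x t) w = fderiv ℝ H p (w, 0) := by
    intro w
    have h1 : fderiv ℂ (fun v => H (v, t)) (x t) w
        = fderiv ℝ (fun v => H (v, t)) (x t) w := by rw [hRC]; rfl
    rw [h1, hud]; rfl
  -- partial derivative in t
  have ht : HasDerivAt (fun s => H (x t, s)) (fderiv ℝ H p (0, 1)) t :=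
    hHd.comp_hasDerivAt (f := fun s => (x t, s)) t ((hasDerivAt_const t (x t)).prodMk (hasDerivAt_id t))
  have htd : deriv (fun s => H (x t, s)) t = fderiv ℝ H p (0, 1) := ht.deriv
  have heq : (fderiv ℂ (fun v => H (v, t)) (x t)) (x' t)
      + deriv (fun s => H (x t, s)) t = 0 := by
    rw [hCapp, htd, ← map_add]
    have : ((x' t, (0:ℝ)) : EuclideanSpace ℂ (Fin n) × ℝ) + (0, 1) = (x' t, 1) := by
      simp
    rw [this, hkey]
  refine ⟨heq, fun hinj => ?_⟩
  set A := fderiv ℂ (fun v => H (v, t)) (x t)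
  have hAv : A (x' t) = -(deriv (fun s => H (x t, s)) t) := by
    rw [eq_neg_iff_add_eq_zero]; exact heq
  have := pinv_apply_apply A hinj (x' t)
  rw [hAv, map_neg] at this
  rw [← this]
end
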